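/- arXiv:1306.6065 — 4 statements merged into one kernel-verified Lean document; each statement's English description precedes it below -/
import Mathlib

section
/- Let F be a free group and R a normal subgroup with Q = F/R perfect and H_2(Q) = 0 (Q super-perfect). Then the inclusion F ×_Q F ↪ F × F induces an isomorphism on first homology (abelianizations). -/
open Subgroup QuotientGroup
open scoped commutatorElement

/-- Let `F` be a free group and `R` a normal subgroup with `Q = F/R` super-perfect, i.e.
`Q` is perfect (`H₁(Q) = 0`) and, via Hopf's formula, `H₂(Q) = (R ∩ [F,F])/[F,R] = 0`.
Then the inclusion `F ×_Q F ↪ F × F` induces an isomorphism on abelianizations. -/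
theorem fiberProduct_abelianization_iso_of_superperfect {α : Type*}
    (R : Subgroup (FreeGroup α)) [R.Normal]
    (hH1 : R ⊔ commutator (FreeGroup α) = ⊤)
    (hH2 : R ⊓ commutator (FreeGroup α) ≤ ⁅(⊤ : Subgroup (FreeGroup α)), R⁆) :
    ∃ ψ : Abelianization
        ↥(MonoidHom.eqLocus ((QuotientGroup.mk' R).comp (MonoidHom.fst (FreeGroup α) (FreeGroup α)))
            ((QuotientGroup.mk' R).comp (MonoidHom.snd (FreeGroup α) (FreeGroup α)))) →*
        Abelianization (FreeGroup α × FreeGroup α),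
      (∀ x, ψ (Abelianization.of x) = Abelianization.of (↑x : FreeGroup α × FreeGroup α)) ∧
      Function.Bijective ψ := by
  open scoped Pointwise in
  set F := FreeGroup α
  set P : Subgroup (F × F) :=
    MonoidHom.eqLocus ((QuotientGroup.mk' R).comp (MonoidHom.fst F F))
      ((QuotientGroup.mk' R).comp (MonoidHom.snd F F)) with hP
  have memP : ∀ g : F × F, g ∈ P ↔ (g.1 : F ⧸ R) = (g.2 : F ⧸ R) := fun g => Iff.rfl
  -- the commutator subgroup of a product
  have hcomm : commutator (F × F) = (commutator F).prod (commutator F) := by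
    rw [_root_.commutator_def, _root_.commutator_def, ← Subgroup.top_prod_top,
      Subgroup.commutator_prod_prod]
  -- kernel of `of`
  have hker : ∀ g : F × F, (Abelianization.of g = 1) ↔ g ∈ commutator (F × F) := fun g =>
    QuotientGroup.eq_one_iff g
  have hkerF : ∀ g : ↥P, (Abelianization.of g = 1) ↔ g ∈ commutator ↥P := fun g =>
    QuotientGroup.eq_one_iff g
  set K : Subgroup (F × F) := (commutator ↥P).map P.subtype with hK
  -- the diagonal homomorphism into P
  have hδmem : ∀ f : F, ((f, f) : F × F) ∈ P := fun f => rfl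
  set δ : F →* ↥P :=
    { toFun := fun f => ⟨(f, f), hδmem f⟩
      map_one' := rfl
      map_mul' := fun _ _ => rfl } with hδ
  have hdiag : ∀ a ∈ commutator F, ((a, a) : F × F) ∈ K := by
    intro a ha
    have h1 : δ a ∈ (commutator F).map δ := Subgroup.mem_map_of_mem δ ha
    have h2 : (commutator F).map δ ≤ commutator ↥P := by
      rw [_root_.commutator_def, Subgroup.map_commutator]
      exact Subgroup.commutator_mono le_top le_top
    exact Subgroup.mem_map_of_mem P.subtype (h2 h1)
  -- elements (1, r) with r ∈ ⁅⊤, R⁆ are in K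
  have hone : ∀ r ∈ (⁅(⊤ : Subgroup F), R⁆ : Subgroup F), ((1, r) : F × F) ∈ K := by
    intro r hr
    have hle : (⁅(⊤ : Subgroup F), R⁆ : Subgroup F) ≤ K.comap (MonoidHom.inr F F) := by
      rw [Subgroup.commutator_le]
      intro g _ s hs
      have hsP : ((1, s) : F × F) ∈ P := by
        rw [memP]
        exact (QuotientGroup.eq.mpr (by simpa using inv_mem hs)).symm.trans rfl
      set p : ↥P := ⟨(g, g), hδmem g⟩
      set q : ↥P := ⟨(1, s), hsP⟩
      have hc : ⁅p, q⁆ ∈ commutator ↥P :=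
        Subgroup.commutator_mem_commutator (Subgroup.mem_top p) (Subgroup.mem_top q)
      have hval : (P.subtype ⁅p, q⁆ : F × F) = (⁅g, (1 : F)⁆, ⁅g, s⁆) := rfl
      have h1 : (⁅g, (1 : F)⁆ : F) = 1 := commutatorElement_one_right g
      have : ((⁅g, s⁆ : F) : F) = ⁅g, s⁆ := rfl
      show ((1, ⁅g, s⁆) : F × F) ∈ K
      have : ((1, ⁅g, s⁆) : F × F) = P.subtype ⁅p, q⁆ := by
        rw [hval, h1]
      rw [this]
      exact Subgroup.mem_map_of_mem P.subtype hc
    simpa using hle hr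
  refine ⟨Abelianization.map P.subtype, fun x => Abelianization.map_of _ _, ?_, ?_⟩
  · -- injectivity
    rw [injective_iff_map_eq_one]
    intro x hx
    obtain ⟨p, rfl⟩ := QuotientGroup.mk_surjective x
    have hx' : ((p : F × F) : F × F) ∈ commutator (F × F) := by
      rw [← hker]
      exact hx
    rw [hcomm, Subgroup.mem_prod] at hx'
    obtain ⟨h1, h2⟩ := hx'
    set a := (p : F × F).1
    set b := (p : F × F).2
    have hab : a⁻¹ * b ∈ R := QuotientGroup.eq.mp ((memP _).mp p.2)
    have hab2 : a⁻¹ * b ∈ commutator F := mul_mem (inv_mem h1) h2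
    have hFR : a⁻¹ * b ∈ (⁅(⊤ : Subgroup F), R⁆ : Subgroup F) := hH2 ⟨hab, hab2⟩
    have hmemK : ((p : F × F) : F × F) ∈ K := by
      have : ((a, b) : F × F) = (a, a) * (1, a⁻¹ * b) := by
        simp [Prod.ext_iff, mul_assoc]
      rw [show ((p : F × F) : F × F) = (a, b) from rfl, this]
      exact mul_mem (hdiag a h1) (hone _ hFR)
    obtain ⟨q, hq, hq2⟩ := hmemK
    have : q = p := Subtype.ext hq2
    rw [this] at hq
    show Abelianization.of p = 1
    exact (hkerF p).mpr hq
  · -- surjectivity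
    intro y
    obtain ⟨⟨a, b⟩, rfl⟩ := QuotientGroup.mk_surjective y
    have htop : a⁻¹ * b ∈ R ⊔ commutator F := hH1 ▸ Subgroup.mem_top _
    have hmul : a⁻¹ * b ∈ (R : Set F) * (commutator F : Set F) := by
      rw [← Subgroup.normal_mul]; exact htop
    obtain ⟨r, hr, c, hc, hrc⟩ := hmul
    have hxP : ((a, b * c⁻¹) : F × F) ∈ P := by
      rw [memP]
      refine QuotientGroup.eq.mpr ?_
      have : a⁻¹ * (b * c⁻¹) = (a⁻¹ * b) * c⁻¹ := by group
      rw [this, ← hrc]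
      simpa using hr
    refine ⟨Abelianization.of ⟨(a, b * c⁻¹), hxP⟩, ?_⟩
    rw [Abelianization.map_of]
    have hsplit : ((a, b * c⁻¹) : F × F) = (a, b) * (1, c⁻¹) := by
      simp [Prod.ext_iff]
    have hone' : Abelianization.of ((1, c⁻¹) : F × F) = 1 := by
      rw [hker, hcomm, Subgroup.mem_prod]
      exact ⟨one_mem _, inv_mem hc⟩
    show Abelianization.of ((a, b * c⁻¹) : F × F) = Abelianization.of ((a, b) : F × F)
    rw [hsplit, map_mul, hone', mul_one]
end

section
/- A group G with a balanced finite presentation (equal numbers of generators and relators) and trivial abelianization H_1(G) = 0 satisfies H_2(G) = 0, i.e., G is super-perfect. -/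
open Subgroup

open scoped commutatorElement

private lemma superperfect_aux {ι : Type} [Finite ι]
    (R : Subgroup (FreeGroup ι)) [R.Normal] (t : ι → FreeGroup ι)
    (hR : R = Subgroup.normalClosure (Set.range t))
    (hH1 : Subsingleton (Abelianization (FreeGroup ι ⧸ R))) :
    R ⊓ commutator (FreeGroup ι) ≤ ⁅(⊤ : Subgroup (FreeGroup ι)), R⁆ := by
  classical
  obtain ⟨C, hC⟩ : ∃ C : Subgroup (FreeGroup ι), C = ⁅(⊤ : Subgroup (FreeGroup ι)), R⁆ :=
    ⟨_, rfl⟩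
  haveI : C.Normal := by rw [hC]; infer_instance
  rw [← hC]
  let π : FreeGroup ι →* FreeGroup ι ⧸ C := QuotientGroup.mk' C
  have hπker : π.ker = C := QuotientGroup.ker_mk' C
  -- elements of R become central in the quotient by C
  have hcent : ∀ r ∈ R, π r ∈ Subgroup.center (FreeGroup ι ⧸ C) := by
    intro r hr
    rw [Subgroup.mem_center_iff]
    intro q
    obtain ⟨f, rfl⟩ := QuotientGroup.mk'_surjective C q
    have h1 : π ⁅f, r⁆ = 1 := by
      rw [← MonoidHom.mem_ker, hπker, hC]
      exact Subgroup.commutator_mem_commutator (Subgroup.mem_top f) hr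
    rw [map_commutatorElement] at h1
    exact (commutatorElement_eq_one_iff_commute.mp h1).eq
  let g : FreeGroup ι →* FreeGroup ι ⧸ C := FreeGroup.lift fun i => π (t i)
  have hgrange : g.range = Subgroup.closure (π '' Set.range t) := by
    rw [FreeGroup.range_lift_eq_closure]
    congr 1
    rw [← Set.range_comp]
    rfl
  have hTR : Set.range t ⊆ (R : Set (FreeGroup ι)) := by
    intro y hy
    rw [hR]
    exact Subgroup.subset_normalClosure hy
  have hcentral_closure :
      Subgroup.closure (π '' Set.range t) ≤ Subgroup.center (FreeGroup ι ⧸ C) := by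
    rw [Subgroup.closure_le]
    rintro _ ⟨y, hy, rfl⟩
    exact hcent y (hTR hy)
  haveI hclnormal : (Subgroup.closure (π '' Set.range t)).Normal := by
    constructor
    intro a ha q
    have hc := Subgroup.mem_center_iff.mp (hcentral_closure ha) q
    rwa [hc, mul_assoc, mul_inv_cancel, mul_one]
  have hmapR : R.map π = Subgroup.closure (π '' Set.range t) := by
    apply le_antisymm
    · rw [Subgroup.map_le_iff_le_comap, hR]
      haveI : ((Subgroup.closure (π '' Set.range t)).comap π).Normal :=
        Subgroup.Normal.comap hclnormal π
      apply Subgroup.normalClosure_le_normal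
      intro y hy
      exact Subgroup.mem_comap.mpr (Subgroup.subset_closure ⟨y, hy, rfl⟩)
    · rw [Subgroup.closure_le]
      rintro _ ⟨y, hy, rfl⟩
      exact Subgroup.mem_map_of_mem π (hTR hy)
  -- the map back to the abelianization
  have hCcomm : C ≤ commutator (FreeGroup ι) := by
    rw [hC, _root_.commutator_def]
    exact Subgroup.commutator_mono le_rfl le_top
  let φ : FreeGroup ι ⧸ C →* Abelianization (FreeGroup ι) :=
    QuotientGroup.lift C Abelianization.of
      (fun x hx => MonoidHom.mem_ker.1
        (Abelianization.commutator_subset_ker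
          (Abelianization.of : FreeGroup ι →* Abelianization (FreeGroup ι)) (hCcomm hx)))
  have hφπ : ∀ f : FreeGroup ι, φ (π f) = Abelianization.of f := fun f => rfl
  -- the induced endomorphism of the abelianization
  let e : Abelianization (FreeGroup ι) →* Abelianization (FreeGroup ι) :=
    Abelianization.lift (φ.comp g)
  have he : ∀ w : FreeGroup ι, e (Abelianization.of w) = φ (g w) := fun w =>
    Abelianization.lift_apply_of _ _
  have hofker : ∀ x : FreeGroup ι, x ∈ commutator (FreeGroup ι) →
      Abelianization.of x = 1 := fun x hx =>
    MonoidHom.mem_ker.1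
      (Abelianization.commutator_subset_ker
        (Abelianization.of : FreeGroup ι →* Abelianization (FreeGroup ι)) hx)
  -- triviality of H₁ gives F = R * [F,F]
  have hFR : ∀ x : FreeGroup ι, ∃ r ∈ R, ∃ c ∈ commutator (FreeGroup ι), x = r * c := by
    intro x
    have h1 : (QuotientGroup.mk' R x) ∈ commutator (FreeGroup ι ⧸ R) := by
      have h2 : Abelianization.of (QuotientGroup.mk' R x) = 1 := Subsingleton.elim _ _
      exact (QuotientGroup.eq_one_iff _).mp h2
    have h3 : commutator (FreeGroup ι ⧸ R) = (commutator (FreeGroup ι)).map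
        (QuotientGroup.mk' R) := by
      rw [_root_.commutator_def, _root_.commutator_def, Subgroup.map_commutator,
        Subgroup.map_top_of_surjective _ (QuotientGroup.mk'_surjective R)]
    rw [h3] at h1
    obtain ⟨c, hc, hcx⟩ := h1
    refine ⟨x * c⁻¹, ?_, c, hc, by group⟩
    have h4 : QuotientGroup.mk' R (x * c⁻¹) = 1 := by
      rw [map_mul, map_inv, hcx, mul_inv_cancel]
    rwa [← QuotientGroup.ker_mk' R, MonoidHom.mem_ker]
  -- e is surjective
  have hRrange : ∀ r ∈ R, π r ∈ g.range := by
    intro r hr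
    rw [hgrange, ← hmapR]
    exact Subgroup.mem_map_of_mem π hr
  have hsurj : Function.Surjective e := by
    intro y
    obtain ⟨x, rfl⟩ : ∃ x, Abelianization.of x = y := QuotientGroup.mk_surjective y
    obtain ⟨r, hr, c, hc, rfl⟩ := hFR x
    obtain ⟨w, hw⟩ := hRrange r hr
    refine ⟨Abelianization.of w, ?_⟩
    rw [he, hw, hφπ, map_mul, hofker c hc, mul_one]
  -- hence e is injective: surjective endomorphism of a Noetherian ℤ-module
  have hinj : Function.Injective e := by
    haveI : Module.Finite ℤ (FreeAbelianGroup ι) :=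
      Module.Finite.of_basis (FreeAbelianGroup.basis ι)
    haveI : IsNoetherian ℤ (FreeAbelianGroup ι) :=
      isNoetherian_of_isNoetherianRing_of_finite ℤ _
    have h := IsNoetherian.injective_of_surjective_endomorphism
      (R := ℤ) (M := FreeAbelianGroup ι)
      (by exact (MonoidHom.toAdditive e : FreeAbelianGroup ι →+ FreeAbelianGroup ι).toIntLinearMap)
      (by exact hsurj)
    exact fun a b hab => h hab
  -- g kills the commutator subgroup
  have hgcomm : ∀ w ∈ commutator (FreeGroup ι), g w = 1 := by
    intro w hw
    have h4 : g w ∈ (commutator (FreeGroup ι)).map g := Subgroup.mem_map_of_mem g hw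
    rw [_root_.commutator_def, Subgroup.map_commutator] at h4
    have h5 : ⁅Subgroup.map g ⊤, Subgroup.map g ⊤⁆ = (⊥ : Subgroup (FreeGroup ι ⧸ C)) := by
      rw [Subgroup.commutator_eq_bot_iff_le_centralizer]
      calc Subgroup.map g ⊤ = g.range := (MonoidHom.range_eq_map g).symm
        _ ≤ Subgroup.center (FreeGroup ι ⧸ C) := hgrange ▸ hcentral_closure
        _ ≤ Subgroup.centralizer (Subgroup.map g ⊤ : Subgroup (FreeGroup ι ⧸ C)) :=
            Subgroup.center_le_centralizer _
    rw [h5] at h4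
    exact h4
  -- conclude
  rintro x ⟨hxR, hxc⟩
  obtain ⟨w, hw⟩ := hRrange x hxR
  have h6 : e (Abelianization.of w) = 1 := by
    rw [he, hw, hφπ, hofker x hxc]
  have h7 : Abelianization.of w = 1 := hinj (by rw [h6, map_one])
  have h8 : w ∈ commutator (FreeGroup ι) := (QuotientGroup.eq_one_iff w).mp h7
  have h9 : π x = 1 := by rw [← hw, hgcomm w h8]
  rwa [← hπker, MonoidHom.mem_ker]

/-- A group with a balanced finite presentation (`n` generators, `n` relators) and trivial
abelianization is super-perfect: via Hopf's formula for the presentation `1 → R → F → G → 1`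
with `F` free of rank `n` and `R` the normal closure of `n` relators,
`H₂(G) = (R ∩ [F,F])/[F,R] = 0`. -/
theorem superperfect_of_balanced_presentation {n : ℕ}
    (R : Subgroup (FreeGroup (Fin n))) [R.Normal]
    (T : Finset (FreeGroup (Fin n))) (hT : T.card = n)
    (hR : R = Subgroup.normalClosure (T : Set (FreeGroup (Fin n))))
    (hH1 : Subsingleton (Abelianization (FreeGroup (Fin n) ⧸ R))) :
    R ⊓ commutator (FreeGroup (Fin n)) ≤ ⁅(⊤ : Subgroup (FreeGroup (Fin n))), R⁆ := by
  classical
  let t : Fin n → FreeGroup (Fin n) := fun i => (T.equivFin.symm (Fin.cast hT.symm i) : _)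
  have ht : Set.range t = (T : Set (FreeGroup (Fin n))) := by
    ext y
    constructor
    · rintro ⟨i, rfl⟩
      exact (T.equivFin.symm (Fin.cast hT.symm i)).2
    · intro hy
      exact ⟨Fin.cast hT (T.equivFin ⟨y, hy⟩), by simp [t]⟩
  exact superperfect_aux R t (by rw [hR, ht]) hH1
end

section
/- Let G = F/R with F free. For every finite k ≥ 1, the Dwyer filtration term φ_{k+1}(G) := ker(H_2(G) → H_2(G/γ_k(G))) is isomorphic to (R ∩ γ_{k+1}(F)·[F,R])/[F,R]. -/
open Subgroup QuotientGroup

/-- Let `G = F/R` with `F` free.  For every finite `k ≥ 1` (here `k = m + 1`, with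
`γ_k(F) = lowerCentralSeries F m` since `γ_1(F) = F`), the Dwyer filtration term
`φ_{k+1}(G) = ker (H₂(G) → H₂(G/γ_k(G)))` — where, via Hopf's formula,
`H₂(G) = (R ∩ [F,F])/[F,R]`, `H₂(G/γ_k(G)) = (γ_k(F)·R ∩ [F,F])/(γ_{k+1}(F)·[F,R])`,
and the map is induced by inclusion — equals `(R ∩ γ_{k+1}(F)·[F,R])/[F,R]`. -/
theorem dwyer_filtration_eq {α : Type*} (R : Subgroup (FreeGroup α)) [R.Normal] (m : ℕ) :
    ∃ φ : (↥(R ⊓ commutator (FreeGroup α)) ⧸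
          (⁅(⊤ : Subgroup (FreeGroup α)), R⁆.subgroupOf (R ⊓ commutator (FreeGroup α)))) →*
        (↥((Subgroup.lowerCentralSeries (⊤ : Subgroup (FreeGroup α)) m ⊔ R) ⊓ commutator (FreeGroup α)) ⧸
          ((Subgroup.lowerCentralSeries (⊤ : Subgroup (FreeGroup α)) (m + 1) ⊔
              ⁅(⊤ : Subgroup (FreeGroup α)), R⁆).subgroupOf
            ((Subgroup.lowerCentralSeries (⊤ : Subgroup (FreeGroup α)) m ⊔ R) ⊓ commutator (FreeGroup α)))),
      (∀ a : ↥(R ⊓ commutator (FreeGroup α)),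
        φ (QuotientGroup.mk a) =
          QuotientGroup.mk (Subgroup.inclusion (inf_le_inf_right _ le_sup_right) a)) ∧
      φ.ker =
        (((R ⊓ (Subgroup.lowerCentralSeries (⊤ : Subgroup (FreeGroup α)) (m + 1) ⊔
            ⁅(⊤ : Subgroup (FreeGroup α)), R⁆)).subgroupOf
              (R ⊓ commutator (FreeGroup α))).map
          (QuotientGroup.mk'
            (⁅(⊤ : Subgroup (FreeGroup α)), R⁆.subgroupOf (R ⊓ commutator (FreeGroup α))))) := by

  set F := FreeGroup α
  set A := R ⊓ commutator F with hA
  set B := (Subgroup.lowerCentralSeries (⊤ : Subgroup F) m ⊔ R) ⊓ commutator F with hB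
  have hAB : A ≤ B := inf_le_inf_right _ le_sup_right
  set N := (⁅(⊤ : Subgroup F), R⁆).subgroupOf A with hN
  set M := (Subgroup.lowerCentralSeries (⊤ : Subgroup F) (m + 1) ⊔ ⁅(⊤ : Subgroup F), R⁆).subgroupOf B with hM
  have hf : ∀ x ∈ N, ((QuotientGroup.mk' M).comp (Subgroup.inclusion hAB)) x = 1 := by
    intro x hx
    simp only [MonoidHom.comp_apply, QuotientGroup.mk'_apply, QuotientGroup.eq_one_iff]
    rw [hM, Subgroup.mem_subgroupOf]
    exact Subgroup.mem_sup_right (Subgroup.mem_subgroupOf.mp hx)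
  refine ⟨QuotientGroup.lift N ((QuotientGroup.mk' M).comp (Subgroup.inclusion hAB)) (fun x hx => MonoidHom.mem_ker.mpr (hf x hx)),
    fun a => rfl, ?_⟩
  ext x
  induction x using QuotientGroup.induction_on with
  | H a =>
    simp only [MonoidHom.mem_ker, QuotientGroup.lift_mk, MonoidHom.comp_apply,
      QuotientGroup.mk'_apply, QuotientGroup.eq_one_iff, Subgroup.mem_map]
    constructor
    · intro h
      refine ⟨a, ?_, rfl⟩
      rw [Subgroup.mem_subgroupOf]
      exact ⟨a.2.1, Subgroup.mem_subgroupOf.mp h⟩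
    · rintro ⟨b, hb, hba⟩
      rw [Subgroup.mem_subgroupOf] at hb ⊢
      have h1 : b⁻¹ * a ∈ N := QuotientGroup.eq.mp hba
      rw [Subgroup.mem_subgroupOf] at h1
      have : (a : F) = (b : F) * ((b⁻¹ * a : A) : F) := by
        push_cast; group
      rw [Subgroup.coe_inclusion, this]
      exact mul_mem hb.2
        (Subgroup.mem_sup_right h1)
end

section
/- Let G = F/R with F free and suppose G is residually nilpotent. Then γ_ω(F/[F,R]) = (R ∩ γ_{k+1}(F)·[F,R])/[F,R] intersected over all finite k; that is, γ_ω(F/[F,R]) ≅ φ_ω(G), the transfinite term of the Dwyer filtration of H_2(G). -/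
open Subgroup QuotientGroup

theorem aux_lcs_map_surjective {G H : Type*} [Group G] [Group H] (f : G →* H)
    (hf : Function.Surjective f) (n : ℕ) :
    Subgroup.map f ((⊤ : Subgroup G).lowerCentralSeries n) = (⊤ : Subgroup H).lowerCentralSeries n := by
  induction n with
  | zero => simpa using Subgroup.map_top_of_surjective f hf
  | succ n ih =>
      show Subgroup.map f ⁅(⊤ : Subgroup G).lowerCentralSeries n, ⊤⁆ = ⁅(⊤ : Subgroup H).lowerCentralSeries n, ⊤⁆
      rw [Subgroup.map_commutator, ih, Subgroup.map_top_of_surjective f hf]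

theorem aux_mk_mem_map {G : Type*} [Group G] (N : Subgroup G) [N.Normal] (H : Subgroup G)
    (f : G) : QuotientGroup.mk' N f ∈ H.map (QuotientGroup.mk' N) ↔ f ∈ H ⊔ N := by
  rw [← Subgroup.mem_comap, Subgroup.comap_map_eq, QuotientGroup.ker_mk']

/-- Let `G = F/R` with `F` free, and suppose `G` is residually nilpotent.  Then
`γ_ω(F/[F,R])` equals the intersection over all finite `k` of
`(R ∩ γ_{k+1}(F)·[F,R])/[F,R]` (here `γ_{k+1}(F) = (⊤ : Subgroup F).lowerCentralSeries k`); that is,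
`γ_ω(F/[F,R])` is the transfinite Dwyer term `φ_ω(G) ⊆ H₂(G)`, with `H₂` computed by
Hopf's formula. -/
theorem lowerCentralSeries_omega_eq_dwyer_omega {α : Type*}
    (R : Subgroup (FreeGroup α)) [R.Normal]
    (hres : (⨅ n : ℕ, (⊤ : Subgroup (FreeGroup α ⧸ R)).lowerCentralSeries n) = ⊥) :
    (⨅ n : ℕ, (⊤ : Subgroup
        (FreeGroup α ⧸ ⁅(⊤ : Subgroup (FreeGroup α)), R⁆)).lowerCentralSeries n) =
      ⨅ k : ℕ,
        ((R ⊓ ((⊤ : Subgroup (FreeGroup α)).lowerCentralSeries (k + 1) ⊔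
            ⁅(⊤ : Subgroup (FreeGroup α)), R⁆)).map
          (QuotientGroup.mk' ⁅(⊤ : Subgroup (FreeGroup α)), R⁆)) := by
  set F := FreeGroup α
  set N : Subgroup F := ⁅(⊤ : Subgroup F), R⁆ with hN
  have hNR : N ≤ R := Subgroup.commutator_le_right ⊤ R
  ext x
  obtain ⟨f, rfl⟩ := QuotientGroup.mk'_surjective N x
  simp only [Subgroup.mem_iInf]
  constructor
  · intro h k
    -- first, `f ∈ R`
    have hfR : f ∈ R := by
      have hmem : ∀ n : ℕ, QuotientGroup.mk' R f ∈ (⊤ : Subgroup (F ⧸ R)).lowerCentralSeries n := by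
        intro n
        have := h n
        rw [← aux_lcs_map_surjective (QuotientGroup.mk' N)
          (QuotientGroup.mk'_surjective N) n, aux_mk_mem_map] at this
        have hf2 : f ∈ (⊤ : Subgroup F).lowerCentralSeries n ⊔ R :=
          (sup_le_sup_left hNR _ : (⊤ : Subgroup F).lowerCentralSeries n ⊔ N ≤ _) this
        rw [← aux_mk_mem_map R, aux_lcs_map_surjective (QuotientGroup.mk' R)
          (QuotientGroup.mk'_surjective R) n] at hf2
        exact hf2
      have : QuotientGroup.mk' R f ∈ (⨅ n : ℕ, (⊤ : Subgroup (F ⧸ R)).lowerCentralSeries n) :=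
        Subgroup.mem_iInf.mpr hmem
      rw [hres, Subgroup.mem_bot] at this
      rwa [← QuotientGroup.ker_mk' R, MonoidHom.mem_ker]
    have hf2 : f ∈ (⊤ : Subgroup F).lowerCentralSeries (k + 1) ⊔ N := by
      have := h (k + 1)
      rwa [← aux_lcs_map_surjective (QuotientGroup.mk' N)
        (QuotientGroup.mk'_surjective N) (k + 1), aux_mk_mem_map] at this
    exact Subgroup.mem_map_of_mem _ ⟨hfR, hf2⟩
  · intro h n
    rw [← aux_lcs_map_surjective (QuotientGroup.mk' N)
      (QuotientGroup.mk'_surjective N) n, aux_mk_mem_map]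
    cases n with
    | zero => simp
    | succ k =>
        have := h k
        rw [aux_mk_mem_map] at this
        have : f ∈ R ⊓ ((⊤ : Subgroup F).lowerCentralSeries (k + 1) ⊔ N) := by
          have hle : N ≤ R ⊓ ((⊤ : Subgroup F).lowerCentralSeries (k + 1) ⊔ N) :=
            le_inf hNR le_sup_right
          rwa [sup_of_le_left hle] at this
        exact this.2
end
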